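/- Let (X,d) be a complete separable metric space and m a nonnegative Borel measure on X which is finite on bounded sets. Fix p ∈ [1,∞) and constants C, L ≥ 0, and for every s ∈ (0,1] let F_s : X → X be a Borel map such that (F_s)_*m ≤ C·m and such that for m-almost every x ∈ X one has d(F_s(x), x) ≤ L·s. If (f_s)_{s∈(0,1]} ⊆ L^p(X,m) and f ∈ L^p(X,m) satisfy f_s → f in L^p(X,m) as s → 0, then also f_s ∘ F_s → f in L^p(X,m) as s → 0. -/

import Mathlib

open MeasureTheory Metric Bornology Filter Function
open scoped ENNReal NNReal Topology

private lemma three_quarters_le {B : ℝ≥0∞} (hB : B ≠ ⊤) : B / 4 + (B / 4 + B / 4) ≤ B := by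
  have h4 : (4 : ℝ≥0∞) ≠ 0 := by norm_num
  have h4t : (4 : ℝ≥0∞) ≠ ⊤ := by norm_num
  have : B / 4 + (B / 4 + B / 4) = 3 * (B / 4) := by ring
  rw [this]
  calc 3 * (B / 4) ≤ 4 * (B / 4) := by gcongr; norm_num
    _ = B := ENNReal.mul_div_cancel h4 h4t

private lemma exists_lip_approx {X : Type*} [MetricSpace X]
    [TopologicalSpace.SeparableSpace X] [MeasurableSpace X] [BorelSpace X]
    (m : Measure X) (hm : ∀ s : Set X, IsBounded s → m s < ⊤)
    (p : ℝ≥0∞) (hp1 : 1 ≤ p) (hp2 : p ≠ ⊤)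
    {g : X → ℝ} (hg : MemLp g p m) {ε : ℝ≥0∞} (hε : ε ≠ 0) :
    ∃ h : X → ℝ, ∃ K : ℝ≥0, LipschitzWith K h ∧ m (Function.support h) < ⊤ ∧
      eLpNorm (g - h) p m ≤ ε := by
  have hp0 : p ≠ 0 := fun h => by simp [h] at hp1
  have hτ : 0 < p.toReal := ENNReal.toReal_pos hp0 hp2
  haveI : SecondCountableTopology X := UniformSpace.secondCountable_of_separable X
  haveI : IsLocallyFiniteMeasure m :=
    ⟨fun x => ⟨ball x 1, ball_mem_nhds x one_pos, hm _ isBounded_ball⟩⟩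
  have H := hg.induction_dense hp2
    (P := fun h : X → ℝ => ∃ K : ℝ≥0, LipschitzWith K h ∧ m (Function.support h) < ⊤)
    ?_ ?_ ?_ hε
  · obtain ⟨h, hle, K, hK, hsupp⟩ := H
    exact ⟨h, K, hK, hsupp, hle⟩
  · -- h0P
    intro c s hs hsfin ε' hε'
    rcases isEmpty_or_nonempty X with hX | hX
    · refine ⟨0, ?_, 0, LipschitzWith.const' 0, by simp⟩
      have : (0 - s.indicator fun _ => c) = (0 : X → ℝ) := funext fun x => isEmptyElim x
      simp [this]
    rcases eq_or_ne c 0 with rfl | hc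
    · exact ⟨0, by simp, 0, LipschitzWith.const' 0, by simp⟩
    obtain ⟨x₀⟩ := hX
    -- choose the target bound B
    set x : ℝ≥0∞ := min 1 (ε' / ‖c‖₊) with hxdef
    have hx0 : x ≠ 0 := by
      simp only [hxdef, ne_eq, min_eq_iff]
      intro h
      rcases h with h | h
      · exact one_ne_zero h.1
      · rw [ENNReal.div_eq_zero_iff] at h
        rcases h.1 with h | h
        · exact hε' h
        · exact (ENNReal.coe_ne_top h).elim
    set B : ℝ≥0∞ := x ^ p.toReal with hBdef
    have hxtop : x ≠ ∞ := ((min_le_left _ _).trans_lt ENNReal.one_lt_top).ne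
    have hB0 : B ≠ 0 := by
      simp [hBdef, ENNReal.rpow_eq_zero_iff, hx0, hxtop]
    have hBrpow : B ^ (1 / p.toReal) = x := by
      rw [hBdef, ← ENNReal.rpow_mul, mul_one_div, div_self hτ.ne', ENNReal.rpow_one]
    have hB4 : B / 4 ≠ 0 := by
      simp [ENNReal.div_eq_zero_iff, hB0]
    -- closed subset F of s
    obtain ⟨F, hFs, hFclosed, hFdiff⟩ := hs.exists_isClosed_diff_lt hsfin.ne hB4
    -- intersect with a big ball
    have htendsto : Tendsto (fun n : ℕ => m (F \ closedBall x₀ n)) atTop (𝓝 0) := by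
      have h1 : (⋂ n : ℕ, F \ closedBall x₀ n) = ∅ := by
        ext y
        simp only [Set.mem_iInter, Set.mem_diff, Set.mem_empty_iff_false, iff_false, not_forall]
        obtain ⟨n, hn⟩ := exists_nat_ge (dist y x₀)
        exact ⟨n, fun h => h.2 (mem_closedBall.2 hn)⟩
      have := tendsto_measure_iInter_atTop (μ := m) (s := fun n : ℕ => F \ closedBall x₀ (n:ℝ))
        (fun n => ((hFclosed.measurableSet.diff measurableSet_closedBall)).nullMeasurableSet)
        (fun i j hij => Set.diff_subset_diff_right (closedBall_subset_closedBall (Nat.cast_le.mpr hij)))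
        ⟨0, ((measure_mono Set.diff_subset).trans_lt ((measure_mono hFs).trans_lt hsfin)).ne⟩
      rwa [h1, measure_empty] at this
    obtain ⟨n, hn⟩ := (ENNReal.tendsto_nhds_zero.mp htendsto (B / 4)
      (pos_iff_ne_zero.mpr hB4)).exists
    set F' : Set X := F ∩ closedBall x₀ n with hF'def
    have hF'closed : IsClosed F' := hFclosed.inter isClosed_closedBall
    have hF'bounded : IsBounded F' := isBounded_closedBall.subset Set.inter_subset_right
    have hF's : F' ⊆ s := Set.inter_subset_left.trans hFs
    have hsF' : m (s \ F') ≤ B / 4 + B / 4 := by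
      have : s \ F' ⊆ (s \ F) ∪ (F \ closedBall x₀ n) := by
        intro y hy
        by_cases hyF : y ∈ F
        · exact Or.inr ⟨hyF, fun hc => hy.2 ⟨hyF, hc⟩⟩
        · exact Or.inl ⟨hy.1, hyF⟩
      exact ((measure_mono this).trans (measure_union_le _ _)).trans
        (add_le_add hFdiff.le hn)
    have hF'fin : m F' < ⊤ := hm _ hF'bounded
    -- choose δ via thickening
    have hthick : Tendsto (fun r => m (thickening r F')) (𝓝[>] (0:ℝ)) (𝓝 (m F')) :=
      tendsto_measure_thickening_of_isClosed
        ⟨1, one_pos, (hm _ (hF'bounded.thickening (δ := 1))).ne⟩ hF'closed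
    have hlt : m F' < m F' + B / 4 := ENNReal.lt_add_right hF'fin.ne hB4
    obtain ⟨δ, hδthick, hδ0⟩ :=
      ((hthick.eventually_lt_const hlt).and self_mem_nhdsWithin).exists
    rcases Set.eq_empty_or_nonempty F' with hF'e | hF'ne
    · -- F' empty : take h = 0
      refine ⟨0, ?_, 0, LipschitzWith.const' 0, by simp⟩
      have hsB : m s ≤ B := by
        have h1 : m s ≤ B / 4 + B / 4 := by
          simpa [hF'e] using hsF'
        calc m s ≤ B / 4 + B / 4 := h1
          _ ≤ B / 4 + (B / 4 + B / 4) := by gcongr; exact le_add_self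
          _ ≤ B := three_quarters_le (ENNReal.rpow_ne_top_of_nonneg hτ.le hxtop)
      rw [zero_sub, eLpNorm_neg]
      calc eLpNorm (s.indicator fun _ => c) p m ≤ ‖c‖₊ * m s ^ (1 / p.toReal) :=
            eLpNorm_indicator_const_le _ _
        _ ≤ ‖c‖₊ * B ^ (1 / p.toReal) := by gcongr
        _ = ‖c‖₊ * x := by rw [hBrpow]
        _ ≤ ‖c‖₊ * (ε' / ‖c‖₊) := by gcongr; exact min_le_right _ _
        _ ≤ ε' := ENNReal.mul_div_le
    -- main case : build the Lipschitz bump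
    set h : X → ℝ := fun y => c * max (1 - infDist y F' / δ) 0 with hhdef
    have hlip : LipschitzWith (Real.toNNReal (|c| / δ)) h := by
      apply LipschitzWith.of_dist_le_mul
      intro y z
      have h1 : dist (h y) (h z) =
          |c| * |max (1 - infDist y F' / δ) 0 - max (1 - infDist z F' / δ) 0| := by
        rw [hhdef]; simp only [Real.dist_eq, ← mul_sub, abs_mul]
      rw [h1, Real.coe_toNNReal _ (by positivity)]
      have h2 : |max (1 - infDist y F' / δ) 0 - max (1 - infDist z F' / δ) 0| ≤
          |(1 - infDist y F' / δ) - (1 - infDist z F' / δ)| := abs_max_sub_max_le_abs _ _ _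
      have h3 : |(1 - infDist y F' / δ) - (1 - infDist z F' / δ)| =
          |infDist y F' - infDist z F'| / δ := by
        have heq : (1 - infDist y F' / δ) - (1 - infDist z F' / δ) =
            (infDist z F' - infDist y F') / δ := by ring
        rw [heq, abs_div, abs_of_pos hδ0, abs_sub_comm]
      have h4 : |infDist y F' - infDist z F'| ≤ dist y z := by
        have := (lipschitz_infDist_pt F').dist_le_mul y z
        rwa [Real.dist_eq, NNReal.coe_one, one_mul] at this
      calc |c| * |max (1 - infDist y F' / δ) 0 - max (1 - infDist z F' / δ) 0|
          ≤ |c| * (|infDist y F' - infDist z F'| / δ) := by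
            exact mul_le_mul_of_nonneg_left (h2.trans_eq h3) (abs_nonneg c)
        _ = |c| / δ * |infDist y F' - infDist z F'| := by ring
        _ ≤ |c| / δ * dist y z := by
            refine mul_le_mul_of_nonneg_left h4 (by positivity)
    have hsupp : Function.support h ⊆ thickening δ F' := by
      intro y hy
      rw [Function.mem_support, hhdef] at hy
      have : (0:ℝ) < max (1 - infDist y F' / δ) 0 := by
        rcases (mul_ne_zero_iff.mp hy).2.lt_or_gt with hlt | hlt
        · exact absurd (le_max_right _ _) hlt.not_ge
        · exact hlt
      have h5 : infDist y F' < δ := by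
        have h6 : 0 < 1 - infDist y F' / δ := by
          by_contra hcon
          push_neg at hcon
          simp [max_eq_right hcon] at this
        exact (div_lt_one hδ0).mp (by linarith)
      exact (mem_thickening_iff_infDist_lt hF'ne).2 h5
    have hsuppfin : m (Function.support h) < ⊤ :=
      (measure_mono hsupp).trans_lt (hm _ (hF'bounded.thickening))
    refine ⟨h, ?_, _, hlip, hsuppfin⟩
    -- the bad set
    set bad : Set X := (thickening δ F' \ F') ∪ (s \ F') with hbaddef
    have hptwise : ∀ y, ‖(h - s.indicator fun _ => c) y‖ ≤
        ‖bad.indicator (fun _ => c) y‖ := by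
      intro y
      by_cases hyF' : y ∈ F'
      · have h7 : infDist y F' = 0 := infDist_zero_of_mem hyF'
        have h8 : h y = c := by rw [hhdef]; simp [h7]
        have h9 : (s.indicator fun _ => c) y = c := Set.indicator_of_mem (hF's hyF') _
        simp [h8, h9]
      by_cases hybad : y ∈ bad
      · rw [Set.indicator_of_mem hybad]
        have ht0 : 0 ≤ max (1 - infDist y F' / δ) 0 := le_max_right _ _
        have ht1 : max (1 - infDist y F' / δ) 0 ≤ 1 := by
          apply max_le _ zero_le_one
          have : 0 ≤ infDist y F' / δ := div_nonneg infDist_nonneg hδ0.le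
          linarith
        by_cases hys : y ∈ s
        · rw [Pi.sub_apply, Set.indicator_of_mem hys, hhdef]
          rw [Real.norm_eq_abs, Real.norm_eq_abs]
          calc |c * max (1 - infDist y F' / δ) 0 - c| =
              |c| * |max (1 - infDist y F' / δ) 0 - 1| := by
                rw [← abs_mul]; ring_nf
            _ ≤ |c| * 1 := by
                refine mul_le_mul_of_nonneg_left ?_ (abs_nonneg c)
                rw [abs_le]; constructor <;> linarith
            _ = |c| := mul_one _
        · rw [Pi.sub_apply, Set.indicator_of_notMem hys, sub_zero, hhdef]
          rw [Real.norm_eq_abs, Real.norm_eq_abs, abs_mul]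
          calc |c| * |max (1 - infDist y F' / δ) 0| ≤ |c| * 1 := by
                refine mul_le_mul_of_nonneg_left ?_ (abs_nonneg c)
                rw [abs_le]; constructor <;> linarith
            _ = |c| := mul_one _
      · have hyth : y ∉ thickening δ F' := fun hyt => hybad (Or.inl ⟨hyt, hyF'⟩)
        have hys : y ∉ s := fun hys => hybad (Or.inr ⟨hys, hyF'⟩)
        have hh0 : h y = 0 := by
          by_contra hcon
          exact hyth (hsupp hcon)
        simp [hh0, Set.indicator_of_notMem hys]
    have hbadB : m bad ≤ B := by
      have h10 : m (thickening δ F' \ F') < B / 4 :=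
        measure_diff_lt_of_lt_add hF'closed.measurableSet.nullMeasurableSet
          (self_subset_thickening hδ0 _) hF'fin.ne hδthick
      calc m bad ≤ m (thickening δ F' \ F') + m (s \ F') := measure_union_le _ _
        _ ≤ B / 4 + (B / 4 + B / 4) := add_le_add h10.le hsF'
        _ ≤ B := three_quarters_le (ENNReal.rpow_ne_top_of_nonneg hτ.le hxtop)
    calc eLpNorm (h - s.indicator fun _ => c) p m ≤
          eLpNorm (bad.indicator fun _ => c) p m := eLpNorm_mono hptwise
      _ ≤ ‖c‖₊ * m bad ^ (1 / p.toReal) := eLpNorm_indicator_const_le _ _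
      _ ≤ ‖c‖₊ * B ^ (1 / p.toReal) := by gcongr
      _ = ‖c‖₊ * x := by rw [hBrpow]
      _ ≤ ‖c‖₊ * (ε' / ‖c‖₊) := by gcongr; exact min_le_right _ _
      _ ≤ ε' := ENNReal.mul_div_le
  · -- h1P : closed under addition
    rintro u v ⟨Ku, hKu, hu⟩ ⟨Kv, hKv, hv⟩
    refine ⟨Ku + Kv, hKu.add hKv, ?_⟩
    exact ((measure_mono (Function.support_add _ _)).trans (measure_union_le _ _)).trans_lt
      (ENNReal.add_lt_top.2 ⟨hu, hv⟩)
  · rintro u ⟨Ku, hKu, -⟩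
    exact hKu.continuous.aestronglyMeasurable

private lemma comp_est {X : Type*} [MeasurableSpace X]
    (m : Measure X) (p : ℝ≥0∞) (hp2 : p ≠ ⊤) (C : ℝ≥0)
    {T : X → X} (hT : Measurable T) (hTp : m.map T ≤ (C : ℝ≥0∞) • m)
    {u : X → ℝ} (hu : AEStronglyMeasurable u m) :
    eLpNorm (u ∘ T) p m ≤ (C : ℝ≥0∞) ^ (1 / p).toReal * eLpNorm u p m := by
  have hac : m.map T ≪ m := Measure.absolutelyContinuous_of_le_smul hTp
  have hu' : AEStronglyMeasurable u (m.map T) := hu.mono_ac hac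
  calc eLpNorm (u ∘ T) p m = eLpNorm u p (m.map T) :=
        (eLpNorm_map_measure hu' hT.aemeasurable).symm
    _ ≤ eLpNorm u p ((C : ℝ≥0∞) • m) := eLpNorm_mono_measure u hTp
    _ = (C : ℝ≥0∞) ^ (1 / p).toReal * eLpNorm u p m := by
        rw [eLpNorm_smul_measure_of_ne_top hp2, smul_eq_mul]

private lemma translation_tendsto {X : Type*} [MetricSpace X]
    [TopologicalSpace.SeparableSpace X] [MeasurableSpace X] [BorelSpace X]
    (m : Measure X) (hm : ∀ s : Set X, IsBounded s → m s < ⊤)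
    (p : ℝ≥0∞) (hp1 : 1 ≤ p) (hp2 : p ≠ ⊤)
    (C : ℝ≥0) (L : ℝ) (hL : 0 ≤ L)
    (F : ℝ → X → X) (hFmeas : ∀ s ∈ Set.Ioc (0:ℝ) 1, Measurable (F s))
    (hFpush : ∀ s ∈ Set.Ioc (0:ℝ) 1, m.map (F s) ≤ (C : ℝ≥0∞) • m)
    (hFdist : ∀ s ∈ Set.Ioc (0:ℝ) 1, ∀ᵐ x ∂m, dist (F s x) x ≤ L * s)
    {g : X → ℝ} (hg : MemLp g p m) :
    Tendsto (fun s => eLpNorm (g ∘ F s - g) p m) (𝓝[Set.Ioc (0:ℝ) 1] 0) (𝓝 0) := by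
  have hp0 : p ≠ 0 := fun h => by simp [h] at hp1
  have hτ : 0 < p.toReal := ENNReal.toReal_pos hp0 hp2
  rw [ENNReal.tendsto_nhds_zero]
  intro ε hε
  set D : ℝ≥0∞ := (C : ℝ≥0∞) ^ (1 / p).toReal with hD
  have hDne : D ≠ ⊤ := ENNReal.rpow_ne_top_of_nonneg ENNReal.toReal_nonneg ENNReal.coe_ne_top
  set ε' : ℝ≥0∞ := (min 1 ε) / (D + 2) with hε'def
  have hmin0 : min 1 ε ≠ 0 := by
    simp only [ne_eq, min_eq_iff]
    rintro (⟨h, -⟩ | ⟨h, -⟩)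
    · exact one_ne_zero h
    · exact hε.ne' h
  have hε'0 : ε' ≠ 0 := by
    rw [hε'def]
    simp only [ne_eq, ENNReal.div_eq_zero_iff, not_or]
    exact ⟨hmin0, by finiteness⟩
  obtain ⟨h, K, hK, hsuppfin, hgh⟩ := exists_lip_approx m hm p hp1 hp2 hg hε'0
  have hhm : AEStronglyMeasurable h m := hK.continuous.aestronglyMeasurable
  have hsuppmeas : MeasurableSet (Function.support h) :=
    measurableSet_support hK.continuous.measurable
  -- middle term bound
  set M : ℝ≥0∞ := (((C : ℝ≥0∞) + 1) * m (Function.support h)) ^ (1 / p.toReal) with hM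
  have hMne : M ≠ ⊤ := by
    apply ENNReal.rpow_ne_top_of_nonneg (by positivity)
    exact (ENNReal.mul_lt_top (by finiteness) hsuppfin).ne
  have hmid : ∀ s ∈ Set.Ioc (0:ℝ) 1,
      eLpNorm (h ∘ F s - h) p m ≤ ENNReal.ofReal ((K : ℝ) * L * s) * M := by
    intro s hs
    set A : Set X := Function.support h ∪ F s ⁻¹' Function.support h with hA
    have hbound : ∀ᵐ y ∂m, ‖(h ∘ F s - h) y‖ ≤
        ‖A.indicator (fun _ => (K : ℝ) * L * s) y‖ := by
      filter_upwards [hFdist s hs] with y hy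
      by_cases hyA : y ∈ A
      · rw [Set.indicator_of_mem hyA]
        have h1 : dist (h (F s y)) (h y) ≤ (K : ℝ) * dist (F s y) y := hK.dist_le_mul _ _
        rw [Real.dist_eq] at h1
        have h2 : |h (F s y) - h y| ≤ (K : ℝ) * (L * s) := by
          refine h1.trans (mul_le_mul_of_nonneg_left hy K.coe_nonneg)
        simp only [Pi.sub_apply, Function.comp_apply, Real.norm_eq_abs]
        exact h2.trans ((le_of_eq (mul_assoc _ _ _).symm).trans (le_abs_self _))
      · have hy1 : h y = 0 := by
          by_contra hcon; exact hyA (Or.inl hcon)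
        have hy2 : h (F s y) = 0 := by
          by_contra hcon; exact hyA (Or.inr hcon)
        simp [Set.indicator_of_notMem hyA, hy1, hy2]
    have hAle : m A ≤ ((C : ℝ≥0∞) + 1) * m (Function.support h) := by
      have h3 : m (F s ⁻¹' Function.support h) ≤ (C : ℝ≥0∞) * m (Function.support h) := by
        have := hFpush s hs
        calc m (F s ⁻¹' Function.support h) = m.map (F s) (Function.support h) := by
              rw [Measure.map_apply (hFmeas s hs) hsuppmeas]
          _ ≤ ((C : ℝ≥0∞) • m) (Function.support h) := this _
          _ = (C : ℝ≥0∞) * m (Function.support h) := rfl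
      calc m A ≤ m (Function.support h) + m (F s ⁻¹' Function.support h) :=
            measure_union_le _ _
        _ ≤ m (Function.support h) + (C : ℝ≥0∞) * m (Function.support h) := by gcongr
        _ = ((C : ℝ≥0∞) + 1) * m (Function.support h) := by ring
    calc eLpNorm (h ∘ F s - h) p m
        ≤ eLpNorm (A.indicator fun _ => (K : ℝ) * L * s) p m := eLpNorm_mono_ae hbound
      _ ≤ ‖(K : ℝ) * L * s‖₊ * m A ^ (1 / p.toReal) := eLpNorm_indicator_const_le _ _
      _ ≤ ENNReal.ofReal ((K : ℝ) * L * s) * M := by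
          have hnorm : (‖(K : ℝ) * L * s‖₊ : ℝ≥0∞) = ENNReal.ofReal ((K : ℝ) * L * s) := by
            rw [← enorm_eq_nnnorm, ← ofReal_norm, Real.norm_eq_abs,
              abs_of_nonneg (mul_nonneg (mul_nonneg K.coe_nonneg hL) hs.1.le)]
          rw [hnorm, hM]
          gcongr
  -- the middle bound tends to zero
  have hmid0 : Tendsto (fun s : ℝ => ENNReal.ofReal ((K : ℝ) * L * s) * M)
      (𝓝[Set.Ioc (0:ℝ) 1] 0) (𝓝 0) := by
    have h1 : Tendsto (fun s : ℝ => ENNReal.ofReal ((K : ℝ) * L * s))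
        (𝓝[Set.Ioc (0:ℝ) 1] 0) (𝓝 0) := by
      have hcont : Continuous fun s : ℝ => (K : ℝ) * L * s := by continuity
      have : Tendsto (fun s : ℝ => (K : ℝ) * L * s) (𝓝 (0:ℝ)) (𝓝 0) := by
        simpa using hcont.tendsto 0
      have h2 := (ENNReal.continuous_ofReal.tendsto 0).comp
        (this.mono_left (nhdsWithin_le_nhds (s := Set.Ioc (0:ℝ) 1)))
      simpa [Function.comp_def] using h2
    simpa using ENNReal.Tendsto.mul_const h1 (Or.inr hMne)
  have hmidev : ∀ᶠ s in 𝓝[Set.Ioc (0:ℝ) 1] 0,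
      ENNReal.ofReal ((K : ℝ) * L * s) * M ≤ ε' :=
    ENNReal.tendsto_nhds_zero.mp hmid0 ε' (pos_iff_ne_zero.mpr hε'0)
  filter_upwards [self_mem_nhdsWithin, hmidev] with s hs hmids
  -- decompose
  have hFm := hFmeas s hs
  have hac : m.map (F s) ≪ m := Measure.absolutelyContinuous_of_le_smul (hFpush s hs)
  have m1 : AEStronglyMeasurable ((g - h) ∘ F s) m :=
    ((hg.1.sub hhm).mono_ac hac).comp_aemeasurable hFm.aemeasurable
  have m2 : AEStronglyMeasurable (h ∘ F s - h) m :=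
    ((hK.continuous.measurable.comp hFm).aestronglyMeasurable).sub hhm
  have m3 : AEStronglyMeasurable (h - g) m := hhm.sub hg.1
  have hdec : (g ∘ F s - g) = ((g - h) ∘ F s) + ((h ∘ F s - h) + (h - g)) := by
    funext y; simp only [Pi.sub_apply, Pi.add_apply, Function.comp_apply]; ring
  calc eLpNorm (g ∘ F s - g) p m
      = eLpNorm (((g - h) ∘ F s) + ((h ∘ F s - h) + (h - g))) p m := by rw [hdec]
    _ ≤ eLpNorm ((g - h) ∘ F s) p m + eLpNorm ((h ∘ F s - h) + (h - g)) p m :=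
        eLpNorm_add_le m1 (m2.add m3) hp1
    _ ≤ eLpNorm ((g - h) ∘ F s) p m + (eLpNorm (h ∘ F s - h) p m + eLpNorm (h - g) p m) := by
        gcongr
        exact eLpNorm_add_le m2 m3 hp1
    _ ≤ D * ε' + (ε' + ε') := by
        gcongr
        · exact (comp_est m p hp2 C hFm (hFpush s hs) (hg.1.sub hhm)).trans
            (by rw [← hD]; gcongr)
        · exact (hmid s hs).trans hmids
        · rw [eLpNorm_sub_comm]; exact hgh
    _ = (D + 2) * ε' := by ring
    _ ≤ min 1 ε := by
        rw [hε'def]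
        exact ENNReal.mul_div_le
    _ ≤ ε := min_le_right _ _

/-- If `F s` are Borel maps with pushforward bounded by `C • m` which move points by at
most `L * s`, then convergence `f s → f` in `L^p` implies `f s ∘ F s → f` in `L^p`. -/
theorem stmt_1 {X : Type*} [MetricSpace X] [CompleteSpace X]
    [TopologicalSpace.SeparableSpace X] [MeasurableSpace X] [BorelSpace X]
    (m : Measure X) (hm : ∀ s : Set X, IsBounded s → m s < ⊤)
    (p : ℝ≥0∞) (hp1 : 1 ≤ p) (hp2 : p ≠ ⊤)
    (C : ℝ≥0) (L : ℝ) (hL : 0 ≤ L)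
    (F : ℝ → X → X) (hFmeas : ∀ s ∈ Set.Ioc (0:ℝ) 1, Measurable (F s))
    (hFpush : ∀ s ∈ Set.Ioc (0:ℝ) 1, m.map (F s) ≤ (C : ℝ≥0∞) • m)
    (hFdist : ∀ s ∈ Set.Ioc (0:ℝ) 1, ∀ᵐ x ∂m, dist (F s x) x ≤ L * s)
    (f : ℝ → X → ℝ) (g : X → ℝ)
    (hf : ∀ s ∈ Set.Ioc (0:ℝ) 1, MemLp (f s) p m) (hg : MemLp g p m)
    (hconv : Tendsto (fun s => eLpNorm (f s - g) p m) (𝓝[Set.Ioc (0:ℝ) 1] 0) (𝓝 0)) :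
    Tendsto (fun s => eLpNorm (f s ∘ F s - g) p m) (𝓝[Set.Ioc (0:ℝ) 1] 0) (𝓝 0) := by
  set D : ℝ≥0∞ := (C : ℝ≥0∞) ^ (1 / p).toReal with hD
  have hDne : D ≠ ⊤ := ENNReal.rpow_ne_top_of_nonneg ENNReal.toReal_nonneg ENNReal.coe_ne_top
  have htrans := translation_tendsto m hm p hp1 hp2 C L hL F hFmeas hFpush hFdist hg
  have hRHS : Tendsto (fun s => D * eLpNorm (f s - g) p m + eLpNorm (g ∘ F s - g) p m)
      (𝓝[Set.Ioc (0:ℝ) 1] 0) (𝓝 0) := by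
    have h1 : Tendsto (fun s => D * eLpNorm (f s - g) p m) (𝓝[Set.Ioc (0:ℝ) 1] 0) (𝓝 0) := by
      have := ENNReal.Tendsto.const_mul hconv (Or.inr hDne)
      simpa using this
    simpa using h1.add htrans
  have hkey : ∀ᶠ s in 𝓝[Set.Ioc (0:ℝ) 1] 0, eLpNorm (f s ∘ F s - g) p m ≤
      D * eLpNorm (f s - g) p m + eLpNorm (g ∘ F s - g) p m := by
    filter_upwards [self_mem_nhdsWithin] with s hs
    have hFm := hFmeas s hs
    have hac : m.map (F s) ≪ m := Measure.absolutelyContinuous_of_le_smul (hFpush s hs)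
    have m1 : AEStronglyMeasurable ((f s - g) ∘ F s) m :=
      (((hf s hs).1.sub hg.1).mono_ac hac).comp_aemeasurable hFm.aemeasurable
    have m2 : AEStronglyMeasurable (g ∘ F s - g) m :=
      ((hg.1.mono_ac hac).comp_aemeasurable hFm.aemeasurable).sub hg.1
    have hdec : (f s ∘ F s - g) = ((f s - g) ∘ F s) + (g ∘ F s - g) := by
      funext y; simp only [Pi.sub_apply, Pi.add_apply, Function.comp_apply]; ring
    calc eLpNorm (f s ∘ F s - g) p m
        = eLpNorm (((f s - g) ∘ F s) + (g ∘ F s - g)) p m := by rw [hdec]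
      _ ≤ eLpNorm ((f s - g) ∘ F s) p m + eLpNorm (g ∘ F s - g) p m :=
          eLpNorm_add_le m1 m2 hp1
      _ ≤ D * eLpNorm (f s - g) p m + eLpNorm (g ∘ F s - g) p m := by
          gcongr
          exact comp_est m p hp2 C hFm (hFpush s hs) ((hf s hs).1.sub hg.1)
  exact tendsto_of_tendsto_of_tendsto_of_le_of_le' tendsto_const_nhds hRHS
    (Eventually.of_forall fun s => zero_le) hkey
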